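/- arXiv:2107.03955 — 4 statements merged into one kernel-verified Lean document; each statement's English description precedes it below -/
import Mathlib

section
/- For all 0 ≤ q < p < 1, kl(q : p) ≥ (p − q)²/(2p), where kl(q:p) = q log(q/p) + (1−q) log((1−q)/(1−p)). -/
/-- Binary KL divergence `kl(q : p) = q log(q/p) + (1-q) log((1-q)/(1-p))`. -/
noncomputable def klBin (q p : ℝ) : ℝ :=
  q * Real.log (q / p) + (1 - q) * Real.log ((1 - q) / (1 - p))

lemma klBin_hasDeriv (q x : ℝ) (hq : 0 < q) (hq1 : q < 1) (hx : 0 < x) (hx1 : x < 1) :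
    HasDerivAt (fun y => klBin q y - (y - q)^2 / (2*y))
      ((x - q) * (x - q + x^2 + q*x) / (2*x^2*(1-x))) x := by
  have hx0 : x ≠ 0 := hx.ne'
  have h1x : (0:ℝ) < 1 - x := by linarith
  have h1x0 : (1:ℝ) - x ≠ 0 := h1x.ne'
  have hqx : q / x ≠ 0 := by positivity
  have hA : HasDerivAt (fun y : ℝ => q / y) ((0 * x - q * 1)/ x^2) x :=
    (hasDerivAt_const x q).div (hasDerivAt_id x) hx0
  have hA' := (hA.log hqx).const_mul q
  have hB : HasDerivAt (fun y : ℝ => (1 - q) / (1 - y))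
      ((0 * (1-x) - (1-q) * (0 - 1)) / (1-x)^2) x :=
    (hasDerivAt_const x (1-q)).div ((hasDerivAt_const x 1).sub (hasDerivAt_id x)) h1x0
  have hq1x : (1 - q) / (1 - x) ≠ 0 := by
    have : (0:ℝ) < 1 - q := by linarith
    positivity
  have hB' := (hB.log hq1x).const_mul (1-q)
  have hC : HasDerivAt (fun y : ℝ => (y - q)^2 / (2*y))
      ((2 * (x-q)^1 * 1 * (2*x) - (x-q)^2 * 2) / (2*x)^2) x :=
    (((hasDerivAt_id x).sub_const q).pow 2).div (by simpa using (hasDerivAt_id x).const_mul 2) (by positivity)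
  have := (hA'.add hB').sub hC
  simp only [klBin]
  refine this.congr_deriv ?_
  have hq0 : q ≠ 0 := hq.ne'
  have hq10 : (1:ℝ) - q ≠ 0 := by linarith
  field_simp
  ring

/-- McAllester's refinement of Pinsker's inequality: `kl(q:p) ≥ (p-q)²/(2p)`. -/
theorem kl_ge_sq_div_two_p (q p : ℝ) (hq : 0 ≤ q) (hqp : q < p) (hp : p < 1) :
    klBin q p ≥ (p - q) ^ 2 / (2 * p) := by
  rcases hq.eq_or_lt with h0 | h0
  · -- q = 0
    subst h0
    have hp0 : (0:ℝ) < p := hqp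
    have h1p : (0:ℝ) < 1 - p := by linarith
    have hlog : Real.log (1 - p) ≤ (1 - p) - 1 := Real.log_le_sub_one_of_pos h1p
    have : klBin 0 p = -Real.log (1 - p) := by
      simp [klBin, one_div, Real.log_inv]
    rw [this, ge_iff_le, div_le_iff₀ (by positivity)]
    nlinarith
  · -- 0 < q
    have hq1 : q < 1 := hqp.trans hp
    have key : ∀ x ∈ Set.Icc q p, HasDerivAt (fun y => klBin q y - (y - q)^2 / (2*y))
        ((x - q) * (x - q + x^2 + q*x) / (2*x^2*(1-x))) x := by
      intro x hx
      exact klBin_hasDeriv q x h0 hq1 (lt_of_lt_of_le h0 hx.1) (lt_of_le_of_lt hx.2 hp)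
    have mono : MonotoneOn (fun y => klBin q y - (y - q)^2 / (2*y)) (Set.Icc q p) := by
      apply monotoneOn_of_deriv_nonneg (convex_Icc q p)
      · intro x hx
        exact (key x hx).continuousAt.continuousWithinAt
      · intro x hx
        rw [interior_Icc] at hx
        exact ((key x ⟨hx.1.le, hx.2.le⟩).differentiableAt).differentiableWithinAt
      · intro x hx
        rw [interior_Icc] at hx
        rw [(key x ⟨hx.1.le, hx.2.le⟩).deriv]
        have hxq : 0 < x := lt_of_lt_of_le h0 hx.1.le
        have hx1 : x < 1 := lt_of_le_of_lt hx.2.le hp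
        apply div_nonneg
        · apply mul_nonneg <;> nlinarith [hx.1, sq_nonneg x, mul_pos h0 hxq]
        · nlinarith
    have h1 := mono (Set.left_mem_Icc.2 hqp.le) (Set.right_mem_Icc.2 hqp.le) hqp.le
    have hgq : klBin q q - (q - q)^2 / (2*q) = 0 := by
      simp [klBin, div_self h0.ne', div_self (show (1:ℝ)-q ≠ 0 by linarith)]
    simp only [hgq] at h1
    linarith [h1]
end

section
/- Let X be a random variable taking values in {+1, −1} with E[X] = x, and let h(x) be the KL divergence of the law of X from the uniform distribution on {+1, −1}. Then h(x) = (1/2)[(1+x)log(1+x) + (1−x)log(1−x)] and h(x) ≤ x²·log 2 for all x ∈ [−1, 1], with log 2 the optimal constant. -/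
/-- KL divergence of the `{+1,-1}`-valued distribution with mean `x`
(probabilities `(1+x)/2` and `(1-x)/2`) from the uniform distribution on `{+1,-1}`. -/
noncomputable def hKL (x : ℝ) : ℝ :=
  ((1 + x) / 2) * Real.log (((1 + x) / 2) / (1 / 2)) +
    ((1 - x) / 2) * Real.log (((1 - x) / 2) / (1 / 2))

open Real Set

noncomputable def fE (x : ℝ) : ℝ :=
  -(1 / 2) * (Real.negMulLog (1 + x) + Real.negMulLog (1 - x))

lemma hKL_eq (x : ℝ) :
    hKL x = (1 / 2) * ((1 + x) * Real.log (1 + x) + (1 - x) * Real.log (1 - x)) := by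
  have h1 : ((1 + x) / 2) / (1 / 2) = 1 + x := by ring
  have h2 : ((1 - x) / 2) / (1 / 2) = 1 - x := by ring
  rw [hKL, h1, h2]; ring

lemma hKL_eq_fE (x : ℝ) : hKL x = fE x := by
  rw [hKL_eq, fE, Real.negMulLog, Real.negMulLog]; ring

lemma fE_even (x : ℝ) : fE (-x) = fE x := by
  simp only [fE]
  ring_nf

/-- key inequality: `log((1+u)/(1-u)) ≤ 2u/(1-u²)` for `0 ≤ u < 1`. -/
lemma key_ineq {u : ℝ} (hu0 : 0 ≤ u) (hu1 : u < 1) :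
    Real.log (1 + u) - Real.log (1 - u) ≤ 2 * u / (1 - u ^ 2) := by
  have h1 : (0:ℝ) < 1 + u := by linarith
  have h2 : (0:ℝ) < 1 - u := by linarith
  set s : ℝ := (1 + u) / (1 - u) with hs
  have hspos : 0 < s := by positivity
  have hs1 : 1 ≤ s := by
    rw [hs, le_div_iff₀ h2]; linarith
  have hlog : Real.log (1 + u) - Real.log (1 - u) = Real.log s := by
    rw [hs, Real.log_div h1.ne' h2.ne']
  have hsinh : Real.log s ≤ Real.sinh (Real.log s) :=
    Real.self_le_sinh_iff.mpr (Real.log_nonneg hs1)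
  have hval : Real.sinh (Real.log s) = (s - s⁻¹) / 2 := by
    rw [Real.sinh_eq, Real.exp_neg, Real.exp_log hspos]
  have hsq : (0:ℝ) < 1 - u ^ 2 := by nlinarith
  have heq : (s - s⁻¹) / 2 = 2 * u / (1 - u ^ 2) := by
    rw [hs, inv_div, div_sub_div _ _ h2.ne' h1.ne', div_div,
      div_eq_div_iff (by positivity) hsq.ne']
    ring
  rw [hlog]
  calc Real.log s ≤ (s - s⁻¹) / 2 := by rw [← hval]; exact hsinh
    _ = 2 * u / (1 - u ^ 2) := heq

noncomputable def qf (u : ℝ) : ℝ := (Real.log (1 + u) - Real.log (1 - u)) / u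

lemma hasDerivAt_N {u : ℝ} (h1 : 1 + u ≠ 0) (h2 : 1 - u ≠ 0) :
    HasDerivAt (fun v : ℝ => Real.log (1 + v) - Real.log (1 - v))
      (1 / (1 + u) - (-1) / (1 - u)) u := by
  have hA : HasDerivAt (fun v : ℝ => Real.log (1 + v)) (1 / (1 + u)) u := by
    have := ((hasDerivAt_id u).const_add 1).log h1
    simpa using this
  have hB : HasDerivAt (fun v : ℝ => Real.log (1 - v)) ((-1) / (1 - u)) u := by
    have := ((hasDerivAt_id u).const_sub 1).log h2
    simpa using this
  exact hA.sub hB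

lemma qf_mono : MonotoneOn qf (Ioo (0:ℝ) 1) := by
  have hderiv : ∀ u ∈ Ioo (0:ℝ) 1,
      HasDerivAt qf
        (((1 / (1 + u) - (-1) / (1 - u)) * u -
          (Real.log (1 + u) - Real.log (1 - u)) * 1) / u ^ 2) u := by
    intro u hu
    have h1 : (1:ℝ) + u ≠ 0 := by have := hu.1; positivity
    have h2 : (1:ℝ) - u ≠ 0 := by have := hu.2; intro h; linarith
    exact (hasDerivAt_N h1 h2).div (hasDerivAt_id u) (ne_of_gt hu.1)
  apply monotoneOn_of_deriv_nonneg (convex_Ioo 0 1)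
  · exact fun u hu => (hderiv u hu).continuousAt.continuousWithinAt
  · intro u hu
    rw [interior_Ioo] at hu
    exact (hderiv u hu).differentiableAt.differentiableWithinAt
  · intro u hu
    rw [interior_Ioo] at hu
    rw [(hderiv u hu).deriv]
    have hu0 := hu.1
    have hu1 := hu.2
    have hkey := key_ineq hu0.le hu1
    have h1 : (0:ℝ) < 1 + u := by linarith
    have h2 : (0:ℝ) < 1 - u := by linarith
    have hsq : (0:ℝ) < 1 - u ^ 2 := by nlinarith
    have hmain : (1 / (1 + u) - (-1) / (1 - u)) * u = 2 * u / (1 - u ^ 2) := by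
      field_simp
      ring
    rw [hmain]
    apply div_nonneg (by linarith) (by positivity)

noncomputable def psi (t : ℝ) : ℝ := t * Real.log 2 - fE (Real.sqrt t)

lemma hasDerivAt_fE {x : ℝ} (h1 : 1 + x ≠ 0) (h2 : 1 - x ≠ 0) :
    HasDerivAt fE ((1 / 2) * (Real.log (1 + x) - Real.log (1 - x))) x := by
  have hA : HasDerivAt (fun v : ℝ => Real.negMulLog (1 + v))
      (-Real.log (1 + x) - 1) x := by
    have := (Real.hasDerivAt_negMulLog h1).comp x ((hasDerivAt_id x).const_add 1)
    exact this.congr_deriv (by simp)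
  have hB : HasDerivAt (fun v : ℝ => Real.negMulLog (1 - v))
      ((-Real.log (1 - x) - 1) * (-1)) x := by
    exact (Real.hasDerivAt_negMulLog h2).comp x ((hasDerivAt_id x).const_sub 1)
  have := ((hA.add hB).const_mul (-(1/2) : ℝ))
  refine this.congr_deriv ?_
  · ring
lemma hasDerivAt_psi {t : ℝ} (ht : t ∈ Ioo (0:ℝ) 1) :
    HasDerivAt psi (Real.log 2 - qf (Real.sqrt t) / 4) t := by
  have ht0 := ht.1
  have ht1 := ht.2
  have hst0 : 0 < Real.sqrt t := Real.sqrt_pos.mpr ht0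
  have hst1 : Real.sqrt t < 1 := by
    rw [show (1:ℝ) = Real.sqrt 1 by simp]
    exact Real.sqrt_lt_sqrt ht0.le ht1
  have h1 : (1:ℝ) + Real.sqrt t ≠ 0 := by positivity
  have h2 : (1:ℝ) - Real.sqrt t ≠ 0 := by intro h; linarith
  have hsqrt : HasDerivAt (fun s : ℝ => Real.sqrt s) (1 / (2 * Real.sqrt t)) t :=
    Real.hasDerivAt_sqrt ht0.ne'
  have hcomp : HasDerivAt (fun s : ℝ => fE (Real.sqrt s))
      ((1 / 2) * (Real.log (1 + Real.sqrt t) - Real.log (1 - Real.sqrt t)) *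
        (1 / (2 * Real.sqrt t))) t :=
    (hasDerivAt_fE h1 h2).comp t hsqrt
  have hlin : HasDerivAt (fun s : ℝ => s * Real.log 2) (Real.log 2) t := by
    simpa using (hasDerivAt_id t).mul_const (Real.log 2)
  have := hlin.sub hcomp
  refine this.congr_deriv ?_
  rw [qf]
  field_simp
  ring

lemma psi_nonneg {t : ℝ} (ht : t ∈ Icc (0:ℝ) 1) : 0 ≤ psi t := by
  have hconc : ConcaveOn ℝ (Icc (0:ℝ) 1) psi := by
    apply AntitoneOn.concaveOn_of_deriv (convex_Icc 0 1)
    · have : Continuous psi := by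
        unfold psi fE
        fun_prop
      exact this.continuousOn
    · rw [interior_Icc]
      intro u hu
      exact (hasDerivAt_psi hu).differentiableAt.differentiableWithinAt
    · rw [interior_Icc]
      intro a ha b hb hab
      rw [(hasDerivAt_psi ha).deriv, (hasDerivAt_psi hb).deriv]
      have hsa : Real.sqrt a ∈ Ioo (0:ℝ) 1 := by
        constructor
        · exact Real.sqrt_pos.mpr ha.1
        · rw [show (1:ℝ) = Real.sqrt 1 by simp]
          exact Real.sqrt_lt_sqrt ha.1.le ha.2
      have hsb : Real.sqrt b ∈ Ioo (0:ℝ) 1 := by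
        constructor
        · exact Real.sqrt_pos.mpr hb.1
        · rw [show (1:ℝ) = Real.sqrt 1 by simp]
          exact Real.sqrt_lt_sqrt hb.1.le hb.2
      have : qf (Real.sqrt a) ≤ qf (Real.sqrt b) :=
        qf_mono hsa hsb (Real.sqrt_le_sqrt hab)
      linarith
  have hpsi0 : psi 0 = 0 := by
    simp [psi, fE]
  have hpsi1 : psi 1 = 0 := by
    have : fE 1 = Real.log 2 := by
      simp [fE, Real.negMulLog]
      ring
    simp [psi, this]
  have h0 : (0:ℝ) ∈ Icc (0:ℝ) 1 := by norm_num
  have h1 : (1:ℝ) ∈ Icc (0:ℝ) 1 := by norm_num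
  have := hconc.2 h0 h1 (by linarith [ht.2] : (0:ℝ) ≤ 1 - t) ht.1 (by ring)
  simp only [smul_eq_mul, mul_zero, mul_one, zero_add] at this
  rw [hpsi0, hpsi1] at this
  linarith

lemma fE_le {x : ℝ} (hx : x ∈ Icc (-1:ℝ) 1) : fE x ≤ x ^ 2 * Real.log 2 := by
  have hx2 : x ^ 2 ∈ Icc (0:ℝ) 1 := by
    constructor
    · positivity
    · nlinarith [hx.1, hx.2]
  have habs : Real.sqrt (x ^ 2) = |x| := Real.sqrt_sq_eq_abs x
  have hfabs : fE |x| = fE x := by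
    rcases abs_cases x with ⟨h, _⟩ | ⟨h, _⟩
    · rw [h]
    · rw [h, fE_even]
  have := psi_nonneg hx2
  rw [psi, habs, hfabs] at this
  linarith

theorem entropy_pm1_bound :
    (∀ x ∈ Set.Icc (-1 : ℝ) 1,
        hKL x = (1 / 2) * ((1 + x) * Real.log (1 + x) + (1 - x) * Real.log (1 - x)) ∧
        hKL x ≤ x ^ 2 * Real.log 2) ∧
      ∀ c : ℝ, (∀ x ∈ Set.Icc (-1 : ℝ) 1, hKL x ≤ c * x ^ 2) → Real.log 2 ≤ c := by
  constructor
  · intro x hx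
    refine ⟨hKL_eq x, ?_⟩
    rw [hKL_eq_fE]
    exact fE_le hx
  · intro c hc
    have h1 : hKL 1 = Real.log 2 := by
      rw [hKL_eq]
      norm_num
      ring
    have := hc 1 (by norm_num)
    rw [h1] at this
    linarith
end

section
/- The function g(x) = ((1+x)log(1+x) + (1−x)log(1−x))/x² is increasing on (0,1), has infimum 1 (limit as x→0⁺), and supremum 2·log 2 (limit as x→1⁻). -/
open Filter

noncomputable def gFun (x : ℝ) : ℝ :=
  ((1 + x) * Real.log (1 + x) + (1 - x) * Real.log (1 - x)) / x ^ 2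

noncomputable def Nf (x : ℝ) : ℝ := (1 + x) * Real.log (1 + x) + (1 - x) * Real.log (1 - x)
noncomputable def Lf (x : ℝ) : ℝ := Real.log (1 + x) - Real.log (1 - x)
noncomputable def kf (x : ℝ) : ℝ := 2 * x / (1 - x ^ 2) - Lf x
noncomputable def hf (x : ℝ) : ℝ := x * Lf x - 2 * Nf x

lemma hasDerivAt_log1p {x : ℝ} (h : -1 < x) :
    HasDerivAt (fun x => Real.log (1 + x)) (1 / (1 + x)) x := by
  have h1 : (1:ℝ) + x ≠ 0 := by linarith
  have := (Real.hasDerivAt_log h1).comp x ((hasDerivAt_id x).const_add 1)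
  exact this.congr_deriv (by simp [div_eq_mul_inv])

lemma hasDerivAt_log1m {x : ℝ} (h : x < 1) :
    HasDerivAt (fun x => Real.log (1 - x)) (-(1 / (1 - x))) x := by
  have h1 : (1:ℝ) - x ≠ 0 := by linarith
  have d : HasDerivAt (fun x : ℝ => 1 - x) (-1) x := (hasDerivAt_id x).const_sub 1
  have := (Real.hasDerivAt_log h1).comp x d
  refine this.congr_deriv ?_
  field_simp

lemma hasDerivAt_Nf {x : ℝ} (h1 : -1 < x) (h2 : x < 1) :
    HasDerivAt Nf (Lf x) x := by
  have e1 : (1:ℝ) + x ≠ 0 := by linarith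
  have e2 : (1:ℝ) - x ≠ 0 := by linarith
  have d1 : HasDerivAt (fun x : ℝ => (1 + x)) 1 x := (hasDerivAt_id x).const_add 1
  have d2 : HasDerivAt (fun x : ℝ => (1 - x)) (-1) x := (hasDerivAt_id x).const_sub 1
  have A := d1.mul (hasDerivAt_log1p h1)
  have B := d2.mul (hasDerivAt_log1m h2)
  have := A.add B
  refine this.congr_deriv ?_
  unfold Lf; field_simp; ring

lemma hasDerivAt_Lf {x : ℝ} (h1 : -1 < x) (h2 : x < 1) :
    HasDerivAt Lf (2 / (1 - x ^ 2)) x := by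
  have e1 : (1:ℝ) + x ≠ 0 := by linarith
  have e2 : (1:ℝ) - x ≠ 0 := by linarith
  have e3 : (1:ℝ) - x ^ 2 ≠ 0 := by nlinarith
  have := (hasDerivAt_log1p h1).sub (hasDerivAt_log1m h2)
  refine this.congr_deriv ?_
  field_simp
  ring

lemma hasDerivAt_kf {x : ℝ} (h1 : -1 < x) (h2 : x < 1) :
    HasDerivAt kf (4 * x ^ 2 / (1 - x ^ 2) ^ 2) x := by
  have e3 : (1:ℝ) - x ^ 2 ≠ 0 := by nlinarith
  have d1 : HasDerivAt (fun x : ℝ => 2 * x) 2 x := by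
    simpa using (hasDerivAt_id x).const_mul 2
  have d2 : HasDerivAt (fun x : ℝ => 1 - x ^ 2) (-(2 * x)) x := by
    simpa using ((hasDerivAt_pow 2 x).const_sub 1)
  have := (d1.div d2 e3).sub (hasDerivAt_Lf h1 h2)
  refine this.congr_deriv ?_
  field_simp
  ring

lemma hasDerivAt_hf {x : ℝ} (h1 : -1 < x) (h2 : x < 1) :
    HasDerivAt hf (kf x) x := by
  have e3 : (1:ℝ) - x ^ 2 ≠ 0 := by nlinarith
  have := ((hasDerivAt_id x).mul (hasDerivAt_Lf h1 h2)).sub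
    ((hasDerivAt_Nf h1 h2).const_mul 2)
  refine this.congr_deriv ?_
  unfold kf
  simp only [id_eq]
  field_simp
  ring

lemma kf_pos {x : ℝ} (h1 : 0 < x) (h2 : x < 1) : 0 < kf x := by
  have mono : StrictMonoOn kf (Set.Ico (0:ℝ) 1) := by
    apply strictMonoOn_of_deriv_pos (convex_Ico 0 1)
    · intro y hy
      exact ((hasDerivAt_kf (by linarith [hy.1]) hy.2).continuousAt).continuousWithinAt
    · intro y hy
      rw [interior_Ico] at hy
      rw [(hasDerivAt_kf (by linarith [hy.1]) hy.2).deriv]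
      exact div_pos (by nlinarith [hy.1]) (pow_pos (by nlinarith [hy.1, hy.2] : (0:ℝ) < 1 - y^2) 2)
  have h0 : kf 0 = 0 := by simp [kf, Lf]
  have := mono (Set.mem_Ico.2 ⟨le_refl 0, one_pos⟩) (Set.mem_Ico.2 ⟨h1.le, h2⟩) h1
  rwa [h0] at this

lemma hf_pos {x : ℝ} (h1 : 0 < x) (h2 : x < 1) : 0 < hf x := by
  have mono : StrictMonoOn hf (Set.Ico (0:ℝ) 1) := by
    apply strictMonoOn_of_deriv_pos (convex_Ico 0 1)
    · intro y hy
      exact ((hasDerivAt_hf (by linarith [hy.1]) hy.2).continuousAt).continuousWithinAt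
    · intro y hy
      rw [interior_Ico] at hy
      rw [(hasDerivAt_hf (by linarith [hy.1]) hy.2).deriv]
      exact kf_pos hy.1 hy.2
  have h0 : hf 0 = 0 := by simp [hf, Nf, Lf]
  have := mono (Set.mem_Ico.2 ⟨le_refl 0, one_pos⟩) (Set.mem_Ico.2 ⟨h1.le, h2⟩) h1
  rwa [h0] at this

lemma hasDerivAt_gFun {x : ℝ} (h1 : 0 < x) (h2 : x < 1) :
    HasDerivAt gFun (hf x / x ^ 3) x := by
  have hx : x ≠ 0 := ne_of_gt h1
  have hx2 : x ^ 2 ≠ 0 := pow_ne_zero 2 hx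
  have d2 : HasDerivAt (fun x : ℝ => x ^ 2) (2 * x) x := by
    simpa using hasDerivAt_pow 2 x
  have := (hasDerivAt_Nf (by linarith) h2).div d2 hx2
  have eq : gFun = fun x => Nf x / x ^ 2 := rfl
  rw [eq]
  refine this.congr_deriv ?_
  unfold hf
  field_simp

lemma gFun_mono : StrictMonoOn gFun (Set.Ioo (0:ℝ) 1) := by
  apply strictMonoOn_of_deriv_pos (convex_Ioo 0 1)
  · intro y hy
    exact ((hasDerivAt_gFun hy.1 hy.2).continuousAt).continuousWithinAt
  · intro y hy
    rw [interior_Ioo] at hy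
    rw [(hasDerivAt_gFun hy.1 hy.2).deriv]
    exact div_pos (hf_pos hy.1 hy.2) (pow_pos hy.1 3)

lemma gFun_lim0 : Tendsto gFun (nhdsWithin 0 (Set.Ioi 0)) (nhds 1) := by
  have mem : Set.Ioo (0:ℝ) 1 ∈ nhdsWithin (0:ℝ) (Set.Ioi 0) :=
    Ioo_mem_nhdsGT_of_mem (by constructor <;> norm_num)
  have hN0 : Nf 0 = 0 := by simp [Nf]
  have hL0 : Lf 0 = 0 := by simp [Lf]
  have eq : gFun = fun x => Nf x / x ^ 2 := rfl
  rw [eq]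
  apply HasDerivAt.lhopital_zero_nhdsGT (f' := Lf) (g' := fun x => 2 * x)
  · filter_upwards [mem] with y hy
    exact hasDerivAt_Nf (by linarith [hy.1]) hy.2
  · filter_upwards with y
    simpa using hasDerivAt_pow 2 y
  · filter_upwards [self_mem_nhdsWithin] with y hy
    have : (0:ℝ) < y := hy
    positivity
  · have : Tendsto Nf (nhds 0) (nhds 0) := by
      have := (hasDerivAt_Nf (by norm_num) (by norm_num : (0:ℝ) < 1)).continuousAt
      simpa [hN0] using this.tendsto
    exact this.mono_left nhdsWithin_le_nhds
  · have : Tendsto (fun x : ℝ => x ^ 2) (nhds 0) (nhds 0) := by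
      simpa using (continuous_pow 2).tendsto (0:ℝ)
    exact this.mono_left nhdsWithin_le_nhds
  · have slope : Tendsto (fun x => Lf x / x) (nhdsWithin 0 {(0:ℝ)}ᶜ) (nhds 2) := by
      have h := hasDerivAt_iff_tendsto_slope.mp
        (by simpa using (hasDerivAt_Lf (by norm_num) (by norm_num : (0:ℝ) < 1)))
      refine h.congr' ?_
      filter_upwards with y
      simp [slope_def_field, hL0, div_eq_mul_inv]
    have slope' : Tendsto (fun x => Lf x / x) (nhdsWithin 0 (Set.Ioi 0)) (nhds 2) :=
      slope.mono_left (nhdsWithin_mono 0 (fun y hy => ne_of_gt hy))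
    have h2 : Tendsto (fun x => Lf x / (2 * x)) (nhdsWithin 0 (Set.Ioi 0)) (nhds (2/2)) := by
      refine (slope'.div_const 2).congr (fun y => ?_)
      rw [div_div, mul_comm]
    simpa using h2

lemma gFun_lim1 : Tendsto gFun (nhdsWithin 1 (Set.Iio 1)) (nhds (2 * Real.log 2)) := by
  have hsub : Tendsto (fun x : ℝ => 1 - x) (nhdsWithin 1 (Set.Iio 1))
      (nhdsWithin 0 (Set.Ioi 0)) := by
    apply tendsto_nhdsWithin_of_tendsto_nhds_of_eventually_within
    · have c : Continuous (fun x : ℝ => 1 - x) := by fun_prop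
      have : Tendsto (fun x : ℝ => 1 - x) (nhds 1) (nhds 0) := by
        simpa using c.tendsto 1
      exact this.mono_left nhdsWithin_le_nhds
    · filter_upwards [self_mem_nhdsWithin] with y hy
      exact sub_pos.2 (Set.mem_Iio.mp hy)
  have hB : Tendsto (fun x : ℝ => (1 - x) * Real.log (1 - x))
      (nhdsWithin 1 (Set.Iio 1)) (nhds 0) := by
    have base : Tendsto (fun t : ℝ => Real.log t * t) (nhdsWithin 0 (Set.Ioi 0)) (nhds 0) := by
      have := tendsto_log_mul_rpow_nhdsGT_zero (one_pos)
      refine this.congr (fun t => ?_)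
      rw [Real.rpow_one]
    have := base.comp hsub
    refine this.congr (fun y => ?_)
    simp [mul_comm]
  have hA : Tendsto (fun x : ℝ => (1 + x) * Real.log (1 + x))
      (nhdsWithin 1 (Set.Iio 1)) (nhds (2 * Real.log 2)) := by
    have c1 : ContinuousAt (fun x : ℝ => 1 + x) 1 := by fun_prop
    have c2 : ContinuousAt (fun x : ℝ => Real.log (1 + x)) 1 :=
      (Real.continuousAt_log (by norm_num)).comp c1
    have := (c1.mul c2).tendsto.mono_left
      (nhdsWithin_le_nhds (s := Set.Iio (1:ℝ)))
    norm_num at this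
    exact this
  have hC : Tendsto (fun x : ℝ => x ^ 2) (nhdsWithin 1 (Set.Iio 1)) (nhds 1) := by
    have := ((continuous_pow 2).tendsto (1:ℝ)).mono_left
      (nhdsWithin_le_nhds (s := Set.Iio (1:ℝ)))
    simpa using this
  have := (hA.add hB).div hC one_ne_zero
  rw [show (2 * Real.log 2) = (2 * Real.log 2 + 0) / 1 by simp]
  exact this

theorem gFun_increasing_inf_sup :
    StrictMonoOn gFun (Set.Ioo (0 : ℝ) 1) ∧
    IsGLB (gFun '' Set.Ioo (0 : ℝ) 1) 1 ∧
    IsLUB (gFun '' Set.Ioo (0 : ℝ) 1) (2 * Real.log 2) ∧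
    Tendsto gFun (nhdsWithin 0 (Set.Ioi 0)) (nhds 1) ∧
    Tendsto gFun (nhdsWithin 1 (Set.Iio 1)) (nhds (2 * Real.log 2)) := by
  refine ⟨gFun_mono, ?_, ?_, gFun_lim0, gFun_lim1⟩
  · constructor
    · rintro y ⟨x, hx, rfl⟩
      refine le_of_tendsto gFun_lim0 ?_
      filter_upwards [Ioo_mem_nhdsGT_of_mem
        (Set.left_mem_Ico.2 hx.1)] with z hz
      exact (gFun_mono ⟨hz.1, lt_trans hz.2 hx.2⟩ hx hz.2).le
    · intro b hb
      refine ge_of_tendsto gFun_lim0 ?_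
      filter_upwards [Ioo_mem_nhdsGT_of_mem
        (Set.left_mem_Ico.2 one_pos)] with z hz
      exact hb ⟨z, hz, rfl⟩
  · constructor
    · rintro y ⟨x, hx, rfl⟩
      refine ge_of_tendsto gFun_lim1 ?_
      filter_upwards [Ioo_mem_nhdsLT_of_mem
        (Set.right_mem_Ioc.2 hx.2)] with z hz
      exact (gFun_mono hx ⟨lt_trans hx.1 hz.1, hz.2⟩ hz.1).le
    · intro b hb
      refine le_of_tendsto gFun_lim1 ?_
      filter_upwards [Ioo_mem_nhdsLT_of_mem
        (Set.right_mem_Ioc.2 one_pos)] with z hz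
      exact hb ⟨z, hz, rfl⟩
end

section
/- For C > 0, define Φ_C(p) = −(1/C)·log(1 − p + p·e^{−C}) for p ∈ [0,1). Then for any 0 ≤ q ≤ p < 1, sup_{C > 0} [C·Φ_C(p) − C·q] = kl(q : p), where kl(q:p) = q log(q/p) + (1−q) log((1−q)/(1−p)). -/
/-- The Catoni transform `Φ_C(p) = -(1/C)·log(1 - p + p·e^{-C})`. -/
noncomputable def PhiC (C p : ℝ) : ℝ := -(1 / C) * Real.log (1 - p + p * Real.exp (-C))

open Real

lemma CPhi_eq (C p : ℝ) (hC : 0 < C) :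
    C * PhiC C p = -Real.log (1 - p + p * Real.exp (-C)) := by
  rw [PhiC, ← mul_assoc, mul_neg, mul_one_div_cancel hC.ne', neg_one_mul]

/-- upper bound -/
lemma catoni_le_kl (q p C : ℝ) (hq : 0 ≤ q) (hqp : q ≤ p) (hp : p < 1) (hC : 0 < C) :
    C * PhiC C p - C * q ≤ klBin q p := by
  rw [CPhi_eq _ _ hC]
  have hpe : (0:ℝ) < Real.exp (-C) := Real.exp_pos _
  have hp0 : 0 ≤ p := le_trans hq hqp
  have hA : 0 < 1 - p + p * Real.exp (-C) := by nlinarith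
  rcases eq_or_lt_of_le hq with hq0 | hq0
  · -- q = 0
    subst hq0
    simp only [klBin, zero_mul, mul_zero, sub_zero, zero_div, Real.log_zero, sub_zero, zero_add]
    have h1 : (1:ℝ) - 0 = 1 := by ring
    have hplt : (0:ℝ) < 1 - p := by linarith
    have : Real.log (1 - p) ≤ Real.log (1 - p + p * Real.exp (-C)) :=
      Real.log_le_log hplt (by nlinarith)
    rw [Real.log_div (by norm_num) (ne_of_gt hplt)]
    simp only [Real.log_one]
    linarith
  · -- 0 < q
    have hp1 : 0 < p := lt_of_lt_of_le hq0 hqp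
    have hq1 : q < 1 := lt_of_le_of_lt hqp hp
    have hx : (0:ℝ) < p * Real.exp (-C) / q := by positivity
    have hy : (0:ℝ) < (1 - p) / (1 - q) := by
      apply div_pos <;> linarith
    have jensen := strictConcaveOn_log_Ioi.concaveOn.2 (Set.mem_Ioi.mpr hx)
      (Set.mem_Ioi.mpr hy) (le_of_lt hq0) (by linarith : (0:ℝ) ≤ 1 - q) (by ring)
    simp only [smul_eq_mul] at jensen
    have hsum : q * (p * Real.exp (-C) / q) + (1 - q) * ((1 - p) / (1 - q))
        = 1 - p + p * Real.exp (-C) := by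
      have h1q : (1:ℝ) - q ≠ 0 := by linarith
      field_simp
      ring
    rw [hsum] at jensen
    have hlx : Real.log (p * Real.exp (-C) / q) = Real.log p + (-C) - Real.log q := by
      rw [Real.log_div (by positivity) (ne_of_gt hq0), Real.log_mul (ne_of_gt hp1) (ne_of_gt hpe),
        Real.log_exp]
    have hly : Real.log ((1 - p) / (1 - q)) = Real.log (1 - p) - Real.log (1 - q) := by
      rw [Real.log_div (by linarith) (by linarith)]
    rw [hlx, hly] at jensen
    unfold klBin
    rw [Real.log_div (ne_of_gt hq0) (ne_of_gt hp1),
      Real.log_div (by linarith : (1:ℝ) - q ≠ 0) (by linarith : (1:ℝ) - p ≠ 0)]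
    nlinarith [jensen]

/-- `sup_{C > 0} [C·Φ_C(p) − C·q] = kl(q : p)` for `0 ≤ q ≤ p < 1`. -/
theorem sup_catoni_eq_kl (q p : ℝ) (hq : 0 ≤ q) (hqp : q ≤ p) (hp : p < 1) :
    sSup {x : ℝ | ∃ C > 0, x = C * PhiC C p - C * q} = klBin q p := by
  set S := {x : ℝ | ∃ C > 0, x = C * PhiC C p - C * q} with hS
  have hne : S.Nonempty := ⟨1 * PhiC 1 p - 1 * q, 1, one_pos, rfl⟩
  have hbdd : BddAbove S := by
    refine ⟨klBin q p, ?_⟩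
    rintro x ⟨C, hC, rfl⟩
    exact catoni_le_kl q p C hq hqp hp hC
  apply le_antisymm
  · exact csSup_le hne (fun x ⟨C, hC, hx⟩ => hx ▸ catoni_le_kl q p C hq hqp hp hC)
  · rw [Real.le_sSup_iff hbdd hne]
    intro ε hε
    have hp0 : 0 ≤ p := le_trans hq hqp
    rcases eq_or_lt_of_le hqp with hqp' | hqp'
    · -- q = p : kl = 0, approach C → 0
      subst hqp'
      have hkl : klBin q q = 0 := by
        rcases eq_or_lt_of_le hq with h | h
        · subst h; simp [klBin]
        · simp [klBin, div_self (ne_of_gt h), div_self (by linarith : (1:ℝ) - q ≠ 0)]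
      rw [hkl, zero_add]
      set C := min 1 (-ε / 2) with hCdef
      have hC : 0 < C := lt_min one_pos (by linarith)
      have hC1 : C ≤ 1 := min_le_left _ _
      have hC2 : C ≤ -ε / 2 := min_le_right _ _
      refine ⟨C * PhiC C q - C * q, ⟨C, hC, rfl⟩, ?_⟩
      rw [CPhi_eq _ _ hC]
      have he : Real.exp (-C) ≤ 1 - C + C ^ 2 := by
        have h1 : C + 1 ≤ Real.exp C := Real.add_one_le_exp C
        have h2 : Real.exp (-C) = 1 / Real.exp C := by
          rw [Real.exp_neg]; ring
        rw [h2]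
        rw [div_le_iff₀ (Real.exp_pos C)]
        nlinarith [Real.exp_pos C]
      have hA : 0 < 1 - q + q * Real.exp (-C) := by
        have := Real.exp_pos (-C); nlinarith
      have hlog : Real.log (1 - q + q * Real.exp (-C)) ≤ q * Real.exp (-C) - q :=
        by have := Real.log_le_sub_one_of_pos hA; linarith
      -- f(C) = -log A - Cq ≥ q(1 - e^{-C}) - Cq = q(1 - e^{-C} - C) ≥ 1 - e^{-C} - C ≥ -C² > ε
      have key : 1 - Real.exp (-C) - C ≥ -C ^ 2 := by nlinarith
      have hq1 : q * (1 - Real.exp (-C) - C) ≥ 1 - Real.exp (-C) - C := by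
        have hneg : 1 - Real.exp (-C) - C ≤ 0 := by
          have := Real.add_one_le_exp (-C); linarith
        nlinarith
      nlinarith
    · rcases eq_or_lt_of_le hq with hq0 | hq0
      · -- q = 0 < p : approach C → ∞
        subst hq0
        have hp1 : 0 < p := hqp'
        have hkl : klBin 0 p = -Real.log (1 - p) := by
          simp [klBin, Real.log_div one_ne_zero (by linarith : (1:ℝ) - p ≠ 0)]
        set C := max 1 (Real.log (2 * p / (-ε * (1 - p)))) with hCdef
        have hC : 0 < C := lt_of_lt_of_le one_pos (le_max_left _ _)
        refine ⟨C * PhiC C p - C * 0, ⟨C, hC, rfl⟩, ?_⟩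
        rw [CPhi_eq _ _ hC, hkl]
        have hplt : (0:ℝ) < 1 - p := by linarith
        have heC : Real.exp (-C) ≤ -ε * (1 - p) / (2 * p) := by
          have h1 : Real.log (2 * p / (-ε * (1 - p))) ≤ C := le_max_right _ _
          have h3 : (0:ℝ) < 2 * p / (-ε * (1 - p)) := by
            apply div_pos (by linarith)
            apply mul_pos (by linarith) hplt
          calc Real.exp (-C) ≤ Real.exp (-Real.log (2 * p / (-ε * (1 - p)))) :=
                Real.exp_le_exp.mpr (by linarith)
            _ = (2 * p / (-ε * (1 - p)))⁻¹ := by rw [Real.exp_neg, Real.exp_log h3]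
            _ = -ε * (1 - p) / (2 * p) := by rw [inv_div]
        have hA : 0 < 1 - p + p * Real.exp (-C) := by
          have := Real.exp_pos (-C); nlinarith
        -- log A ≤ log(1-p) + p e^{-C}/(1-p)
        have hratio : Real.log (1 - p + p * Real.exp (-C)) - Real.log (1 - p)
            ≤ p * Real.exp (-C) / (1 - p) := by
          have h4 : Real.log ((1 - p + p * Real.exp (-C)) / (1 - p))
              ≤ (1 - p + p * Real.exp (-C)) / (1 - p) - 1 :=
            Real.log_le_sub_one_of_pos (div_pos hA hplt)
          rw [Real.log_div (ne_of_gt hA) (ne_of_gt hplt)] at h4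
          have : (1 - p + p * Real.exp (-C)) / (1 - p) - 1 = p * Real.exp (-C) / (1 - p) := by
            field_simp
            ring
          linarith [h4, this ▸ h4]
        have hsmall : p * Real.exp (-C) / (1 - p) ≤ -ε / 2 := by
          rw [div_le_iff₀ hplt]
          have := mul_le_mul_of_nonneg_left heC (le_of_lt hp1)
          calc p * Real.exp (-C) ≤ p * (-ε * (1 - p) / (2 * p)) := this
            _ = -ε / 2 * (1 - p) := by field_simp
        linarith
      · -- 0 < q < p : attained at C*
        have hp1 : 0 < p := lt_trans hq0 hqp'
        have hq1 : q < 1 := lt_trans hqp' hp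
        have hplt : (0:ℝ) < 1 - p := by linarith
        have hqlt : (0:ℝ) < 1 - q := by linarith
        set C := Real.log (p * (1 - q) / (q * (1 - p))) with hCdef
        have hratio : (1:ℝ) < p * (1 - q) / (q * (1 - p)) := by
          rw [lt_div_iff₀ (by positivity)]
          nlinarith
        have hC : 0 < C := Real.log_pos hratio
        have heC : Real.exp (-C) = q * (1 - p) / (p * (1 - q)) := by
          rw [Real.exp_neg, Real.exp_log (by positivity : (0:ℝ) < p * (1 - q) / (q * (1 - p)))]
          rw [inv_div]
        have hkl_mem : klBin q p ∈ S := by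
          refine ⟨C, hC, ?_⟩
          rw [CPhi_eq _ _ hC, heC]
          have hAval : 1 - p + p * (q * (1 - p) / (p * (1 - q))) = (1 - p) / (1 - q) := by
            field_simp
            ring
          rw [hAval, hCdef]
          rw [Real.log_div (ne_of_gt hplt) (ne_of_gt hqlt),
            Real.log_div (by positivity : p * (1 - q) ≠ 0) (by positivity : q * (1 - p) ≠ 0),
            Real.log_mul (ne_of_gt hp1) (ne_of_gt hqlt),
            Real.log_mul (ne_of_gt hq0) (ne_of_gt hplt)]
          unfold klBin
          rw [Real.log_div (ne_of_gt hq0) (ne_of_gt hp1), Real.log_div (ne_of_gt hqlt) (ne_of_gt hplt)]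
          ring
        exact ⟨klBin q p, hkl_mem, by linarith⟩
end
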